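/- arXiv:1705.05214 — 6 statements merged into one kernel-verified Lean document; each statement's English description precedes it below -/
import Mathlib

section
/- For all nonnegative reals a and b with a + b > 0, the double series ∑_{k=0}^∞ ∑_{m=0}^∞ a^k b^m / (k! · m! · Γ(k+m+3/2)) converges and equals sinh(2√(a+b)) / (√π · √(a+b)). -/
open Real

private lemma gamma_half (n : ℕ) :
    (n.factorial : ℝ) * Real.Gamma ((n : ℝ) + 3 / 2) =
      ((2 * n + 1).factorial : ℝ) * Real.sqrt π / 2 ^ (2 * n + 1) := by
  induction n with
  | zero =>
    have : ((0 : ℕ) : ℝ) + 3 / 2 = 1 / 2 + 1 := by norm_num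
    rw [this, Real.Gamma_add_one (by norm_num), Real.Gamma_one_half_eq]
    norm_num
    ring
  | succ n ih =>
    have h1 : ((n + 1 : ℕ) : ℝ) + 3 / 2 = ((n : ℝ) + 3 / 2) + 1 := by push_cast; ring
    rw [h1, Real.Gamma_add_one (by positivity)]
    have h2 : (2 * (n + 1) + 1).factorial =
        (2 * n + 3) * ((2 * n + 2) * (2 * n + 1).factorial) := by
      have h : 2 * (n + 1) + 1 = ((2 * n + 1) + 1) + 1 := by ring
      rw [h, Nat.factorial_succ, Nat.factorial_succ]
    have h3 : (n + 1).factorial = (n + 1) * n.factorial := Nat.factorial_succ n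
    rw [h3, h2]
    push_cast
    have : ((n : ℝ) + 1) * (n.factorial : ℝ) * (((n : ℝ) + 3 / 2) * Real.Gamma ((n : ℝ) + 3 / 2))
        = ((n : ℝ) + 1) * ((n : ℝ) + 3 / 2) * ((n.factorial : ℝ) * Real.Gamma ((n : ℝ) + 3 / 2)) := by
      ring
    rw [this, ih]
    have h4 : 2 * (n + 1) + 1 = (2 * n + 1) + 2 := by ring
    rw [h4, pow_add]
    field_simp
    ring

theorem stmt_0 (a b : ℝ) (ha : 0 ≤ a) (hb : 0 ≤ b) (hab : 0 < a + b) :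
    Summable (fun p : ℕ × ℕ =>
      a ^ p.1 * b ^ p.2 /
        (p.1.factorial * p.2.factorial * Real.Gamma ((p.1 : ℝ) + p.2 + 3 / 2))) ∧
    ∑' (k : ℕ), ∑' (m : ℕ),
        a ^ k * b ^ m /
          (k.factorial * m.factorial * Real.Gamma ((k : ℝ) + m + 3 / 2)) =
      Real.sinh (2 * Real.sqrt (a + b)) / (Real.sqrt π * Real.sqrt (a + b)) := by
  set c : ℝ := a + b with hc
  set f : ℕ × ℕ → ℝ := fun p =>
    a ^ p.1 * b ^ p.2 /
      (p.1.factorial * p.2.factorial * Real.Gamma ((p.1 : ℝ) + p.2 + 3 / 2)) with hf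
  set g : ℕ → ℝ := fun n =>
    c ^ n * 2 ^ (2 * n + 1) / ((2 * n + 1).factorial * Real.sqrt π) with hg
  have hπ : (0 : ℝ) < Real.sqrt π := Real.sqrt_pos.mpr Real.pi_pos
  have hsc : (0 : ℝ) < Real.sqrt c := Real.sqrt_pos.mpr hab
  -- nonnegativity of f
  have hf0 : ∀ p : ℕ × ℕ, 0 ≤ f p := by
    intro p
    have hΓ : 0 < Real.Gamma ((p.1 : ℝ) + p.2 + 3 / 2) :=
      Real.Gamma_pos_of_pos (by positivity)
    have : (0:ℝ) < (p.1.factorial : ℝ) * p.2.factorial * Real.Gamma ((p.1 : ℝ) + p.2 + 3 / 2) := by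
      positivity
    exact div_nonneg (by positivity) this.le
  -- the diagonal sums
  have hdiag : ∀ n : ℕ, ∑ p ∈ Finset.HasAntidiagonal.antidiagonal n, f p = g n := by
    intro n
    have hΓ : 0 < Real.Gamma ((n : ℝ) + 3 / 2) := Real.Gamma_pos_of_pos (by positivity)
    have step1 : ∑ p ∈ Finset.HasAntidiagonal.antidiagonal n, f p =
        (∑ p ∈ Finset.HasAntidiagonal.antidiagonal n,
          a ^ p.1 * b ^ p.2 / (p.1.factorial * p.2.factorial)) / Real.Gamma ((n : ℝ) + 3 / 2) := by
      rw [Finset.sum_div]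
      refine Finset.sum_congr rfl fun p hp => ?_
      rw [Finset.HasAntidiagonal.mem_antidiagonal] at hp
      have : ((p.1 : ℝ) + p.2 + 3 / 2) = (n : ℝ) + 3 / 2 := by
        rw [← hp]; push_cast; ring
      rw [hf]
      simp only
      rw [this, div_div]
    have step2 : ∑ p ∈ Finset.HasAntidiagonal.antidiagonal n,
        a ^ p.1 * b ^ p.2 / (p.1.factorial * p.2.factorial) = c ^ n / n.factorial := by
      rw [Finset.Nat.sum_antidiagonal_eq_sum_range_succ
        (fun k m => a ^ k * b ^ m / (k.factorial * m.factorial))]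
      rw [hc, add_pow]
      rw [Finset.sum_div]
      refine Finset.sum_congr rfl fun k hk => ?_
      rw [Finset.mem_range, Nat.lt_succ_iff] at hk
      rw [Nat.cast_choose ℝ hk]
      have h1 : (k.factorial : ℝ) ≠ 0 := Nat.cast_ne_zero.mpr (Nat.factorial_ne_zero k)
      have h2 : ((n - k).factorial : ℝ) ≠ 0 := Nat.cast_ne_zero.mpr (Nat.factorial_ne_zero _)
      have h3 : (n.factorial : ℝ) ≠ 0 := Nat.cast_ne_zero.mpr (Nat.factorial_ne_zero n)
      field_simp
    rw [step1, step2, div_div, gamma_half n, div_div_eq_mul_div]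
  -- HasSum for g
  have hpow : ∀ n : ℕ, (2 * Real.sqrt c) ^ (2 * n + 1) = c ^ n * 2 ^ (2 * n + 1) * Real.sqrt c := by
    intro n
    have h : Real.sqrt c ^ (2 * n + 1) = c ^ n * Real.sqrt c := by
      rw [pow_succ, pow_mul, Real.sq_sqrt hab.le]
    rw [mul_pow, h]
    ring
  have hgsum : HasSum g (Real.sinh (2 * Real.sqrt c) / (Real.sqrt π * Real.sqrt c)) := by
    have h := (Real.hasSum_sinh (2 * Real.sqrt c)).div_const (Real.sqrt π * Real.sqrt c)
    convert h using 2 with n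
    · rfl
    rw [hg]
    simp only
    rw [hpow n]
    field_simp
  -- transfer to the sigma type
  set e : (Σ n : ℕ, Finset.HasAntidiagonal.antidiagonal n) ≃ ℕ × ℕ := Finset.HasAntidiagonal.sigmaAntidiagonalEquivProd with he
  have hfib : ∀ n : ℕ, HasSum (fun p : Finset.HasAntidiagonal.antidiagonal n => f (e ⟨n, p⟩)) (g n) := by
    intro n
    have : (fun p : Finset.HasAntidiagonal.antidiagonal n => f (e ⟨n, p⟩)) = fun p => f p.1 := rfl
    rw [this, ← hdiag n, ← Finset.sum_attach (Finset.HasAntidiagonal.antidiagonal n) f]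
    exact hasSum_fintype _
  have hsig : Summable (f ∘ e) := by
    apply (summable_sigma_of_nonneg (fun x => hf0 _)).mpr
    refine ⟨fun n => (hfib n).summable, ?_⟩
    have : (fun n => ∑' p : Finset.HasAntidiagonal.antidiagonal n, f (e ⟨n, p⟩)) = g := by
      funext n; exact (hfib n).tsum_eq
    rw [this]
    exact hgsum.summable
  have hsum : Summable f := e.summable_iff.mp hsig
  refine ⟨hsum, ?_⟩
  have h1 : ∑' (k : ℕ), ∑' (m : ℕ), f (k, m) = ∑' p, f p := (Summable.tsum_prod hsum).symm
  have h2 : ∑' p, f p = ∑' x : Σ n : ℕ, Finset.HasAntidiagonal.antidiagonal n, f (e x) := (e.tsum_eq f).symm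
  have h3 : ∑' x : Σ n : ℕ, Finset.HasAntidiagonal.antidiagonal n, f (e x) = ∑' n, g n := by
    have h4 := Summable.tsum_sigma hsig
    simp only [Function.comp_apply] at h4
    rw [h4]
    exact tsum_congr fun n => (hfib n).tsum_eq
  calc ∑' (k : ℕ), ∑' (m : ℕ), f (k, m) = ∑' n, g n := by rw [h1, h2, h3]
    _ = Real.sinh (2 * Real.sqrt c) / (Real.sqrt π * Real.sqrt c) := hgsum.tsum_eq
end

section
/- For every natural number k and every real β, ∫_0^{π/2} exp(-β·cos(2θ)) · (sin(2θ))^{2k+1} dθ = (√π/2) · k! · ∑_{m=0}^∞ β^{2m} / (2^{2m} · m! · Γ(k+m+3/2)). -/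
set_option maxHeartbeats 4000000
open Real

lemma aux_gamma_half (m : ℕ) :
    Real.Gamma ((m:ℝ) + 1/2) = Real.sqrt π * (2*m).factorial / (4^m * m.factorial) := by
  induction m with
  | zero =>
      rw [show ((0:ℕ):ℝ) + 1/2 = 1/2 by norm_num, Real.Gamma_one_half_eq]; simp
  | succ n ih =>
    have h : ((n:ℝ) + 1/2) ≠ 0 := by positivity
    have e : ((n+1:ℕ):ℝ) + 1/2 = ((n:ℝ)+1/2) + 1 := by push_cast; ring
    rw [e, Real.Gamma_add_one h, ih]
    have e1 : (2*(n+1)).factorial = (2*n+2) * ((2*n+1) * (2*n).factorial) := by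
      have : 2*(n+1) = (2*n+1)+1 := by ring
      rw [this, Nat.factorial_succ, Nat.factorial_succ]
    rw [e1, Nat.factorial_succ]
    have h4 : (4:ℝ)^n ≠ 0 := by positivity
    have hf : ((n.factorial : ℝ)) ≠ 0 := by positivity
    push_cast
    rw [pow_succ]
    field_simp
    ring

lemma aux_J (k : ℕ) : ∀ m : ℕ,
    (∫ x in (0:ℝ)..1, x^(2*m) * (1-x^2)^k) =
      Real.Gamma ((m:ℝ) + 1/2) * k.factorial / (2 * Real.Gamma ((k:ℝ) + m + 3/2)) := by
  induction k with
  | zero =>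
    intro m
    simp only [pow_zero, mul_one, Nat.factorial_zero, Nat.cast_zero, Nat.cast_one]
    rw [integral_pow]
    have h0 : ((0:ℝ)+m+3/2) = ((m:ℝ)+1/2)+1 := by push_cast; ring
    rw [h0, Real.Gamma_add_one (by positivity)]
    have hΓ : Real.Gamma ((m:ℝ)+1/2) ≠ 0 := (Real.Gamma_pos_of_pos (by positivity)).ne'
    have h1 : ((m:ℝ) + 1/2) ≠ 0 := by positivity
    push_cast
    field_simp
    ring
  | succ k ih =>
    intro m
    have hc1 : Continuous fun x : ℝ => x^(2*m) * (1-x^2)^(k+1) := by continuity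
    have hc2 : Continuous fun x : ℝ => x^(2*m+2) * (1-x^2)^k := by continuity
    have key : (∫ x in (0:ℝ)..1,
        ((2*(m:ℝ)+1) * (x^(2*m) * (1-x^2)^(k+1)) - (2*((k:ℝ)+1)) * (x^(2*m+2) * (1-x^2)^k))) = 0 := by
      have hd : ∀ x ∈ Set.uIcc (0:ℝ) 1, HasDerivAt (fun x : ℝ => x^(2*m+1) * (1-x^2)^(k+1))
          ((2*(m:ℝ)+1) * (x^(2*m) * (1-x^2)^(k+1)) - (2*((k:ℝ)+1)) * (x^(2*m+2) * (1-x^2)^k)) x := by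
        intro x _
        have h2 : HasDerivAt (fun x:ℝ => 1-x^2) (-(2*x)) x := by
          simpa using ((hasDerivAt_pow 2 x).const_sub 1)
        have h3 := h2.pow (k+1)
        have h1 := hasDerivAt_pow (2*m+1) x
        have : HasDerivAt (fun x => x^(2*m+1) * (1-x^2)^(k+1)) _ x := h1.mul h3
        convert this using 1
        push_cast
        ring
      rw [intervalIntegral.integral_eq_sub_of_hasDerivAt hd (by
        apply Continuous.intervalIntegrable; continuity)]
      norm_num
    rw [intervalIntegral.integral_sub ((show Continuous fun x : ℝ => (2*(m:ℝ)+1) * (x^(2*m) * (1-x^2)^(k+1)) from continuous_const.mul hc1).intervalIntegrable _ _)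
      ((show Continuous fun x : ℝ => (2*((k:ℝ)+1)) * (x^(2*m+2) * (1-x^2)^k) from continuous_const.mul hc2).intervalIntegrable _ _), intervalIntegral.integral_const_mul,
      intervalIntegral.integral_const_mul, sub_eq_zero] at key
    have ihm := ih (m+1)
    rw [show 2*(m+1) = 2*m+2 from by ring] at ihm
    rw [ihm] at key
    -- key : (2m+1) * ∫ = 2(k+1) * (Γ(m+1+1/2) k! / (2 Γ(k+(m+1)+3/2)))
    have h2m : (2*(m:ℝ)+1) ≠ 0 := by positivity
    have hint : (∫ x in (0:ℝ)..1, x^(2*m) * (1-x^2)^(k+1)) =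
        (2*((k:ℝ)+1)) * (Real.Gamma (((m+1:ℕ):ℝ) + 1/2) * k.factorial /
          (2 * Real.Gamma ((k:ℝ) + (m+1:ℕ) + 3/2))) / (2*(m:ℝ)+1) := by
      field_simp at key ⊢
      linarith [key]
    rw [hint]
    have eA : (((m+1:ℕ)):ℝ) + 1/2 = ((m:ℝ)+1/2) + 1 := by push_cast; ring
    rw [eA, Real.Gamma_add_one (by positivity)]
    have eB : ((k:ℝ) + ((m+1:ℕ):ℝ) + 3/2) = (((k+1:ℕ)):ℝ) + (m:ℝ) + 3/2 := by push_cast; ring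
    rw [eB]
    have hΓ2 : Real.Gamma ((((k+1:ℕ)):ℝ) + m + 3/2) ≠ 0 :=
      (Real.Gamma_pos_of_pos (by positivity)).ne'
    rw [Nat.factorial_succ]
    push_cast
    field_simp

lemma aux_even (f : ℝ → ℝ) (hc : Continuous f) (hf : ∀ x, f (-x) = f x) :
    (∫ x in (-1:ℝ)..1, f x) = 2 * ∫ x in (0:ℝ)..1, f x := by
  have h1 : (∫ x in (0:ℝ)..1, f (-x)) = ∫ x in (-1:ℝ)..0, f x := by
    rw [intervalIntegral.integral_comp_neg]; norm_num
  have h2 : (∫ x in (0:ℝ)..1, f (-x)) = ∫ x in (0:ℝ)..1, f x := by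
    simp only [hf]
  have h3 := intervalIntegral.integral_add_adjacent_intervals
    (μ := MeasureTheory.volume) (hc.intervalIntegrable (-1:ℝ) 0) (hc.intervalIntegrable (0:ℝ) 1)
  rw [← h3, ← h1, h2]; ring

lemma aux_odd (f : ℝ → ℝ) (hc : Continuous f) (hf : ∀ x, f (-x) = -f x) :
    (∫ x in (-1:ℝ)..1, f x) = 0 := by
  have h1 : (∫ x in (0:ℝ)..1, f (-x)) = ∫ x in (-1:ℝ)..0, f x := by
    rw [intervalIntegral.integral_comp_neg]; norm_num
  have h2 : (∫ x in (0:ℝ)..1, f (-x)) = -∫ x in (0:ℝ)..1, f x := by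
    simp only [hf]
    exact intervalIntegral.integral_neg
  have h3 := intervalIntegral.integral_add_adjacent_intervals
    (μ := MeasureTheory.volume) (hc.intervalIntegrable (-1:ℝ) 0) (hc.intervalIntegrable (0:ℝ) 1)
  rw [← h3, ← h1, h2]; ring

theorem stmt_2 (k : ℕ) (β : ℝ) :
    ∫ θ in (0 : ℝ)..(π / 2),
        Real.exp (-β * Real.cos (2 * θ)) * (Real.sin (2 * θ)) ^ (2 * k + 1) =
      (Real.sqrt π / 2) * k.factorial *
        ∑' m : ℕ,
          β ^ (2 * m) /
            (2 ^ (2 * m) * m.factorial * Real.Gamma ((k : ℝ) + m + 3 / 2)) := by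
  -- Step A : substitute u = 2θ
  have stepA : (∫ θ in (0:ℝ)..(π/2),
        Real.exp (-β * Real.cos (2*θ)) * (Real.sin (2*θ))^(2*k+1))
      = (1/2) * ∫ u in (0:ℝ)..π, Real.exp (-β * Real.cos u) * (Real.sin u)^(2*k+1) := by
    have h := intervalIntegral.integral_comp_mul_left (a := 0) (b := π/2)
      (fun u => Real.exp (-β * Real.cos u) * (Real.sin u)^(2*k+1)) (two_ne_zero (α := ℝ))
    beta_reduce at h
    rw [h, show (2:ℝ) * (π/2) = π by ring, show (2:ℝ) * 0 = 0 by ring]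
    simp [smul_eq_mul]
  -- Step B : substitute x = cos u
  have stepB : (∫ u in (0:ℝ)..π, Real.exp (-β * Real.cos u) * (Real.sin u)^(2*k+1))
      = ∫ x in (-1:ℝ)..1, Real.exp (-β * x) * (1-x^2)^k := by
    have hg : Continuous fun x : ℝ => Real.exp (-β * x) * (1-x^2)^k := by continuity
    have h := intervalIntegral.integral_comp_mul_deriv (a := 0) (b := π)
      (f := Real.cos) (f' := fun u => -Real.sin u)
      (g := fun x => Real.exp (-β * x) * (1-x^2)^k)
      (fun x _ => Real.hasDerivAt_cos x) (Real.continuous_sin.neg.continuousOn) hg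
    rw [Real.cos_zero, Real.cos_pi] at h
    have hcongr : (∫ u in (0:ℝ)..π, Real.exp (-β * Real.cos u) * (Real.sin u)^(2*k+1))
        = -∫ u in (0:ℝ)..π,
            ((fun x => Real.exp (-β * x) * (1-x^2)^k) ∘ Real.cos) u * (-Real.sin u) := by
      rw [← intervalIntegral.integral_neg]
      apply intervalIntegral.integral_congr
      intro u _
      simp only [Function.comp_apply, neg_mul, neg_neg, mul_neg]
      have hs : Real.sin u ^ (2*k+1) = (1 - Real.cos u ^ 2)^k * Real.sin u := by
        rw [pow_succ, pow_mul, Real.sin_sq]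
      rw [hs]; ring
    rw [hcongr, h, intervalIntegral.integral_symm]
    simp
  -- Step C : power series
  set F : ℕ → C(ℝ, ℝ) := fun n =>
    ⟨fun x => ((-β)^n / n.factorial) * x^n * (1-x^2)^k, by continuity⟩ with hF
  have hFs : Summable fun n =>
      ‖(F n).restrict (⟨Set.uIcc (-1:ℝ) 1, isCompact_uIcc⟩ : TopologicalSpace.Compacts ℝ)‖ := by
    apply Summable.of_nonneg_of_le (fun n => norm_nonneg _) ?_
      (Real.summable_pow_div_factorial |β|)
    intro n
    apply (ContinuousMap.norm_le _ (by positivity)).mpr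
    rintro ⟨x, hx⟩
    have hx' : x ∈ Set.Icc (-1:ℝ) 1 := by
      simpa [Set.uIcc_of_le (by norm_num : (-1:ℝ) ≤ 1)] using hx
    have hxabs : |x| ≤ 1 := abs_le.mpr ⟨hx'.1, hx'.2⟩
    have hx2 : x^2 ≤ 1 := by
      rw [← sq_abs]; exact pow_le_one₀ (abs_nonneg x) hxabs
    have h1x : (0:ℝ) ≤ 1 - x^2 := by linarith
    have h1x' : 1 - x^2 ≤ 1 := by nlinarith [sq_nonneg x]
    simp only [ContinuousMap.restrict_apply, hF, ContinuousMap.coe_mk]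
    rw [Real.norm_eq_abs]
    simp only [abs_mul, abs_div, abs_pow, abs_neg]
    have e1 : |x|^n ≤ 1 := pow_le_one₀ (abs_nonneg x) hxabs
    have e2 : |1 - x^2|^k ≤ 1 := pow_le_one₀ (abs_nonneg _) (by rwa [abs_of_nonneg h1x])
    have e3 : |(n.factorial : ℝ)| = (n.factorial : ℝ) := abs_of_pos (by positivity)
    rw [e3]
    calc |β|^n / n.factorial * |x|^n * |1-x^2|^k
        ≤ |β|^n / n.factorial * 1 * 1 := by
          apply mul_le_mul (mul_le_mul le_rfl e1 (by positivity) (by positivity)) e2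
            (by positivity) (by positivity)
      _ = |β|^n / n.factorial := by ring
  have hsum := intervalIntegral.hasSum_intervalIntegral_of_summable_norm
    (a := -1) (b := 1) hFs
  have hptw : (∫ x in (-1:ℝ)..1, ∑' n, F n x)
      = ∫ x in (-1:ℝ)..1, Real.exp (-β * x) * (1-x^2)^k := by
    apply intervalIntegral.integral_congr
    intro x _
    have hexp : HasSum (fun n : ℕ => ((-β)^n / n.factorial) * x^n * (1-x^2)^k)
        (Real.exp (-β * x) * (1-x^2)^k) := by
      have h := (NormedSpace.expSeries_div_hasSum_exp (-β * x)).mul_right ((1-x^2)^k)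
      rw [← Real.exp_eq_exp_ℝ] at h
      have e : (fun n : ℕ => ((-β)^n / n.factorial) * x^n * (1-x^2)^k)
          = fun i : ℕ => (-β * x) ^ i / (i.factorial : ℝ) * (1 - x ^ 2) ^ k := by
        funext n; rw [mul_pow]; ring
      rw [e]; exact h
    simpa [hF] using hexp.tsum_eq
  rw [hptw] at hsum
  -- values of the individual integrals
  have hT : ∀ n : ℕ, (∫ x in (-1:ℝ)..1, F n x)
      = ((-β)^n / n.factorial) * ∫ x in (-1:ℝ)..1, x^n * (1-x^2)^k := by
    intro n
    simp only [hF, ContinuousMap.coe_mk, mul_assoc]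
    rw [intervalIntegral.integral_const_mul]
  have hodd : ∀ m : ℕ, (∫ x in (-1:ℝ)..1, F (2*m+1) x) = 0 := by
    intro m
    rw [hT]
    have : (∫ x in (-1:ℝ)..1, x^(2*m+1) * (1-x^2)^k) = 0 := by
      apply aux_odd (fun x => x^(2*m+1) * (1-x^2)^k) ((continuous_pow _).mul ((continuous_const.sub (continuous_pow 2)).pow _))
      intro x
      rw [show ((-x)^(2*m+1) : ℝ) = -x^(2*m+1) by rw [Odd.neg_pow ⟨m, by ring⟩]]
      ring_nf
    rw [this, mul_zero]
  have heven : ∀ m : ℕ, (∫ x in (-1:ℝ)..1, F (2*m) x)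
      = (Real.sqrt π * k.factorial) *
        (β^(2*m) / (2^(2*m) * m.factorial * Real.Gamma ((k:ℝ) + m + 3/2))) := by
    intro m
    rw [hT]
    have hsym : (∫ x in (-1:ℝ)..1, x^(2*m) * (1-x^2)^k)
        = 2 * ∫ x in (0:ℝ)..1, x^(2*m) * (1-x^2)^k := by
      apply aux_even (fun x => x^(2*m) * (1-x^2)^k) ((continuous_pow _).mul ((continuous_const.sub (continuous_pow 2)).pow _))
      intro x
      rw [show ((-x)^(2*m) : ℝ) = x^(2*m) by rw [Even.neg_pow ⟨m, by ring⟩]]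
      ring_nf
    rw [hsym, aux_J k m, aux_gamma_half m]
    have hΓ : Real.Gamma ((k:ℝ) + m + 3/2) ≠ 0 :=
      (Real.Gamma_pos_of_pos (by positivity)).ne'
    have hb : ((-β)^(2*m) : ℝ) = β^(2*m) := by rw [Even.neg_pow ⟨m, by ring⟩]
    rw [hb]
    have h4 : ((2:ℝ)^(2*m)) = 4^m := by rw [pow_mul]; norm_num
    rw [h4]
    have hf1 : ((2*m).factorial : ℝ) ≠ 0 := by positivity
    have hf2 : ((m).factorial : ℝ) ≠ 0 := by positivity
    have h4' : ((4:ℝ)^m) ≠ 0 := by positivity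
    field_simp
  -- assemble the tsum
  have hsummable := hsum.summable
  have hinj : Function.Injective (fun m : ℕ => 2*m) := fun a b h => by simp only [] at h; omega
  have hse : Summable fun m : ℕ => ∫ x in (-1:ℝ)..1, F (2*m) x :=
    hsummable.comp_injective hinj
  have hso : Summable fun m : ℕ => ∫ x in (-1:ℝ)..1, F (2*m+1) x := by
    apply summable_of_ne_finset_zero (s := ∅)
    intro m _
    exact hodd m
  have htsum := tsum_even_add_odd (f := fun n => ∫ x in (-1:ℝ)..1, F n x) hse hso
  beta_reduce at htsum
  have hzero : (∑' m : ℕ, ∫ x in (-1:ℝ)..1, F (2*m+1) x) = 0 := by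
    rw [tsum_congr hodd]
    exact tsum_zero
  have hfinal : (∫ x in (-1:ℝ)..1, Real.exp (-β * x) * (1-x^2)^k)
      = Real.sqrt π * k.factorial *
        ∑' m : ℕ, β^(2*m) / (2^(2*m) * m.factorial * Real.Gamma ((k:ℝ) + m + 3/2)) := by
    rw [← hsum.tsum_eq, ← htsum, hzero, add_zero, tsum_congr heven, tsum_mul_left]
  rw [stepA, stepB, hfinal]
  ring
end

section
/- Let φ₁, φ₂, φ₃ > 0 with φ₁, φ₂, φ₃ pairwise distinct, and define F(x) = 1 - (e^{-x/φ₃}/(φ₂-φ₁)) · (φ₂·e^{-x/φ₂} - φ₁·e^{-x/φ₁} + x·(Ei(-x/φ₂) - Ei(-x/φ₁))) for x > 0. Then F(x) = ((1/φ₃) + (log φ₂ - log φ₁)/(φ₂ - φ₁))·x + o(x) as x → 0⁺. -/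
open Real Filter Asymptotics

/-- The exponential integral `Ei` (principal value), defined through its
standard series representation `Ei x = γ + log |x| + ∑ xⁿ/(n·n!)`. -/
noncomputable def Ei (x : ℝ) : ℝ :=
  Real.eulerMascheroniConstant + Real.log |x| +
    ∑' n : ℕ, x ^ (n + 1) / ((n + 1) * (n + 1).factorial)

/-- The entire part of `Ei`: `SS x = ∑ xⁿ⁺¹/((n+1)·(n+1)!)`. -/
noncomputable def SS (x : ℝ) : ℝ :=
  ∑' n : ℕ, x ^ (n + 1) / ((n + 1) * (n + 1).factorial)

lemma SS_zero : SS 0 = 0 := by simp [SS]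

lemma Esum : Summable (fun n : ℕ => (1:ℝ) / n.factorial) := by
  simpa using Real.summable_pow_div_factorial 1

lemma fact_aux (n : ℕ) : ((n : ℝ) + 1) * (n + 1).factorial ≥ (n + 1).factorial := by
  have h1 : (0:ℝ) < (n+1).factorial := by positivity
  have : (1:ℝ) ≤ (n:ℝ) + 1 := by linarith [Nat.cast_nonneg (α:=ℝ) n]
  nlinarith

lemma SS_summable (y : ℝ) :
    Summable (fun n : ℕ => y ^ (n + 1) / ((n + 1) * (n + 1).factorial) : ℕ → ℝ) := by
  apply Summable.of_norm_bounded (g := fun n : ℕ => |y| ^ (n + 1) / (n + 1).factorial)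
  · exact (summable_nat_add_iff 1).2 (Real.summable_pow_div_factorial |y|)
  · intro n
    have h1 : (0:ℝ) < (n+1).factorial := by positivity
    rw [norm_div, norm_pow, Real.norm_eq_abs, Real.norm_eq_abs,
      abs_of_pos (lt_of_lt_of_le h1 (fact_aux n))]
    gcongr
    exact fact_aux n

lemma SS_bound (y : ℝ) (hy : |y| ≤ 1) :
    |SS y - y| ≤ (∑' n : ℕ, (1:ℝ) / n.factorial) * y ^ 2 := by
  have hsum := SS_summable y
  have htail : Summable (fun n : ℕ =>
      y ^ (n + 1 + 1) / ((n + 1 + 1) * (n + 1 + 1).factorial) : ℕ → ℝ) := by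
    have := (summable_nat_add_iff 1).2 hsum
    push_cast at this ⊢
    exact this
  have key : SS y - y = ∑' n : ℕ, y ^ (n + 1 + 1) / ((n + 1 + 1) * (n + 1 + 1).factorial) := by
    rw [SS, Summable.tsum_eq_zero_add hsum]
    norm_num
  rw [key]
  have hterm : ∀ n : ℕ, |y ^ (n + 1 + 1) / ((n + 1 + 1) * (n + 1 + 1).factorial)|
      ≤ y ^ 2 * ((1:ℝ) / n.factorial) := by
    intro n
    have h1 : (0:ℝ) < n.factorial := by positivity
    have h2 : (n.factorial:ℝ) ≤ ((n:ℝ) + 1 + 1) * (n + 1 + 1).factorial := by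
      have h3 : (n.factorial : ℝ) ≤ ((n+2).factorial : ℝ) := by
        exact_mod_cast Nat.factorial_le (Nat.le_add_right n 2)
      have h4 : (0:ℝ) < ((n+2).factorial : ℝ) := by positivity
      have h5 : (1:ℝ) ≤ (n:ℝ)+1+1 := by linarith [Nat.cast_nonneg (α:=ℝ) n]
      have h6 : ((n+1+1).factorial:ℝ) = ((n+2).factorial:ℝ) := by norm_num
      rw [h6]; nlinarith
    have h4 : |y| ^ (n + 1 + 1) ≤ y ^ 2 := by
      calc |y| ^ (n + 1 + 1) = |y| ^ n * |y| ^ 2 := by ring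
        _ ≤ 1 * |y| ^ 2 := by
            apply mul_le_mul_of_nonneg_right (pow_le_one₀ (abs_nonneg y) hy) (by positivity)
        _ = y ^ 2 := by rw [one_mul, sq_abs]
    rw [abs_div, abs_pow]
    have h5 : |((n:ℝ) + 1 + 1) * (n + 1 + 1).factorial| = ((n:ℝ) + 1 + 1) * (n + 1 + 1).factorial := by
      apply abs_of_pos; positivity
    rw [h5, div_le_iff₀ (by positivity)]
    calc |y| ^ (n + 1 + 1) ≤ y ^ 2 := h4
      _ = y ^ 2 * (1 / n.factorial) * n.factorial := by field_simp
      _ ≤ y ^ 2 * (1 / n.factorial) * (((n:ℝ) + 1 + 1) * (n + 1 + 1).factorial) := by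
          apply mul_le_mul_of_nonneg_left h2 (by positivity)
  calc |∑' n : ℕ, y ^ (n + 1 + 1) / ((n + 1 + 1) * (n + 1 + 1).factorial)|
      ≤ ∑' n : ℕ, |y ^ (n + 1 + 1) / ((n + 1 + 1) * (n + 1 + 1).factorial)| := by
        simpa only [Real.norm_eq_abs] using
          norm_tsum_le_tsum_norm (f := fun n : ℕ => y ^ (n + 1 + 1) / ((n + 1 + 1) * (n + 1 + 1).factorial))
          (by simpa only [Real.norm_eq_abs] using htail.abs)
    _ ≤ ∑' n : ℕ, y ^ 2 * ((1:ℝ) / n.factorial) :=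
        Summable.tsum_le_tsum hterm htail.abs (Esum.mul_left _)
    _ = (∑' n : ℕ, (1:ℝ) / n.factorial) * y ^ 2 := by rw [tsum_mul_left]; ring

lemma SS_hasDeriv : HasDerivAt SS 1 0 := by
  rw [hasDerivAt_iff_isLittleO]
  simp only [SS_zero, sub_zero, smul_eq_mul, mul_one]
  have hO : (fun y => SS y - y) =O[nhds 0] fun y : ℝ => y ^ 2 := by
    rw [isBigO_iff]
    refine ⟨∑' n : ℕ, (1:ℝ) / n.factorial, ?_⟩
    filter_upwards [Metric.ball_mem_nhds (0:ℝ) one_pos] with y hy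
    have h1 : |y| ≤ 1 := by
      rw [Metric.mem_ball, Real.dist_eq, sub_zero] at hy; linarith
    have := SS_bound y h1
    rw [Real.norm_eq_abs, Real.norm_eq_abs, abs_of_nonneg (sq_nonneg y)]
    exact this
  have h2 : (fun y : ℝ => y ^ 2) =o[nhds 0] fun y : ℝ => y := by
    rw [isLittleO_iff_tendsto (fun x hx => by simp [hx])]
    have : (fun x : ℝ => x ^ 2 / x) = fun x : ℝ => x := by
      funext x
      by_cases hx : x = 0
      · simp [hx]
      · field_simp
    rw [this]
    exact Filter.tendsto_id
  exact hO.trans_isLittleO h2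

/-- The analytic extension of `F` to a neighbourhood of `0`. -/
noncomputable def HH (φ₁ φ₂ φ₃ : ℝ) (x : ℝ) : ℝ :=
  1 - Real.exp (-x / φ₃) / (φ₂ - φ₁) *
    (φ₂ * Real.exp (-x / φ₂) - φ₁ * Real.exp (-x / φ₁) +
      x * ((Real.log φ₁ - Real.log φ₂) + (SS (-x / φ₂) - SS (-x / φ₁))))

lemma inner_deriv (φ : ℝ) : HasDerivAt (fun x : ℝ => -x / φ) (-1 / φ) 0 :=
  (hasDerivAt_id 0).neg.div_const φ

lemma exp_deriv (φ : ℝ) : HasDerivAt (fun x : ℝ => Real.exp (-x / φ)) (-1 / φ) 0 := by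
  simpa using (inner_deriv φ).exp

lemma SS_comp_deriv (φ : ℝ) : HasDerivAt (fun x : ℝ => SS (-x / φ)) (-1 / φ) 0 := by
  have h0 : HasDerivAt SS 1 (-(0:ℝ) / φ) := by norm_num [SS_hasDeriv]
  have := h0.comp 0 (inner_deriv φ); rw [one_mul] at this; exact this

lemma HH_deriv (φ₁ φ₂ φ₃ : ℝ) (h₁ : 0 < φ₁) (h₂ : 0 < φ₂) (h₃ : 0 < φ₃)
    (h12 : φ₁ ≠ φ₂) :
    HasDerivAt (HH φ₁ φ₂ φ₃)
      (1 / φ₃ + (Real.log φ₂ - Real.log φ₁) / (φ₂ - φ₁)) 0 := by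
  have hne : φ₂ - φ₁ ≠ 0 := sub_ne_zero.2 (Ne.symm h12)
  have hB : HasDerivAt (fun x : ℝ =>
      φ₂ * Real.exp (-x / φ₂) - φ₁ * Real.exp (-x / φ₁) +
        x * ((Real.log φ₁ - Real.log φ₂) + (SS (-x / φ₂) - SS (-x / φ₁))))
      (φ₂ * (-1 / φ₂) - φ₁ * (-1 / φ₁) +
        (1 * ((Real.log φ₁ - Real.log φ₂) + (SS (-(0:ℝ) / φ₂) - SS (-(0:ℝ) / φ₁)))
          + 0 * (0 + (-1 / φ₂ - -1 / φ₁)))) 0 :=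
    (((exp_deriv φ₂).const_mul φ₂).sub ((exp_deriv φ₁).const_mul φ₁)).add
      ((hasDerivAt_id 0).mul ((hasDerivAt_const 0 _).add
        ((SS_comp_deriv φ₂).sub (SS_comp_deriv φ₁))))
  have h := (((exp_deriv φ₃).div_const (φ₂ - φ₁)).mul hB).const_sub 1
  have h' : HasDerivAt (HH φ₁ φ₂ φ₃) _ 0 := h
  convert h' using 1
  simp only [neg_zero, zero_div, Real.exp_zero, SS_zero, one_mul, zero_mul, mul_zero,
    sub_self, mul_one, add_zero, zero_add, sub_zero]
  field_simp
  ring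

lemma Ei_eq (x φ : ℝ) (hx : 0 < x) (hφ : 0 < φ) :
    Ei (-x / φ) = Real.eulerMascheroniConstant + (Real.log x - Real.log φ) + SS (-x / φ) := by
  unfold Ei
  rw [show |(-x / φ)| = x / φ by
      rw [abs_div, abs_neg, abs_of_pos hx, abs_of_pos hφ],
    Real.log_div hx.ne' hφ.ne']
  rfl

lemma HH_zero (φ₁ φ₂ φ₃ : ℝ) (h12 : φ₁ ≠ φ₂) : HH φ₁ φ₂ φ₃ 0 = 0 := by
  have hne : φ₂ - φ₁ ≠ 0 := sub_ne_zero.2 (Ne.symm h12)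
  simp [HH, SS_zero, div_mul_eq_mul_div, hne]

theorem stmt_6 (φ₁ φ₂ φ₃ : ℝ) (h₁ : 0 < φ₁) (h₂ : 0 < φ₂) (h₃ : 0 < φ₃)
    (h12 : φ₁ ≠ φ₂) (h13 : φ₁ ≠ φ₃) (h23 : φ₂ ≠ φ₃)
    (F : ℝ → ℝ)
    (hF : ∀ x : ℝ, 0 < x → F x =
      1 - Real.exp (-x / φ₃) / (φ₂ - φ₁) *
        (φ₂ * Real.exp (-x / φ₂) - φ₁ * Real.exp (-x / φ₁) +
          x * (Ei (-x / φ₂) - Ei (-x / φ₁)))) :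
    (fun x : ℝ =>
        F x - (1 / φ₃ + (Real.log φ₂ - Real.log φ₁) / (φ₂ - φ₁)) * x)
      =o[nhdsWithin 0 (Set.Ioi 0)] (fun x : ℝ => x) := by
  have hiso := hasDerivAt_iff_isLittleO.mp (HH_deriv φ₁ φ₂ φ₃ h₁ h₂ h₃ h12)
  refine ((hiso.mono nhdsWithin_le_nhds).congr' ?_ ?_)
  · filter_upwards [self_mem_nhdsWithin] with x hx
    have hx0 : 0 < x := hx
    rw [hF x hx0, HH_zero φ₁ φ₂ φ₃ h12, sub_zero, sub_zero, smul_eq_mul]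
    rw [Ei_eq x φ₂ hx0 h₂, Ei_eq x φ₁ hx0 h₁]
    unfold HH
    ring
  · filter_upwards with x
    rw [sub_zero]
end

section
/- Let φ₃ > 0 be fixed, and for φ₁, φ₂ > 0 with φ₁ ≠ φ₂ define a(φ₁, φ₂) = 1/φ₃ + (log φ₂ - log φ₁)/(φ₂ - φ₁), extended by a(φ, φ) = 1/φ₃ + 1/φ. Under the constraint φ₁ + φ₂ = c for a fixed constant c > 0, the function a attains its minimum exactly when φ₁ = φ₂ = c/2, and a(φ₁, c - φ₁) → ∞ as φ₁ → 0⁺. -/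
open Real Filter

lemma log_gt_aux (t : ℝ) (ht : 1 < t) : 2 * (t - 1) / (t + 1) < Real.log t := by
  set g : ℝ → ℝ := fun s => Real.log s - 2 * (s - 1) / (s + 1) with hg
  have hmono : StrictMonoOn g (Set.Ici 1) := by
    apply strictMonoOn_of_deriv_pos (convex_Ici 1)
    · apply ContinuousOn.sub
      · exact Real.continuousOn_log.mono (fun s hs => by
          simp only [Set.mem_Ici] at hs; simp; intro h; linarith)
      · apply ContinuousOn.div (by fun_prop) (by fun_prop)
        intro s hs; simp only [Set.mem_Ici] at hs; intro h; linarith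
    · intro s hs
      rw [interior_Ici] at hs
      simp only [Set.mem_Ioi] at hs
      have hs0 : (0:ℝ) < s := by linarith
      have hd : HasDerivAt g (1 / s - 4 / (s + 1) ^ 2) s := by
        have h1 : HasDerivAt Real.log (1 / s) s := by
          simpa [one_div] using Real.hasDerivAt_log (ne_of_gt hs0)
        have h2 : HasDerivAt (fun s : ℝ => 2 * (s - 1) / (s + 1))
            (4 / (s + 1) ^ 2) s := by
          have hn : HasDerivAt (fun s : ℝ => 2 * (s - 1)) 2 s := by
            simpa using ((hasDerivAt_id s).sub_const 1).const_mul 2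
          have hdd : HasDerivAt (fun s : ℝ => s + 1) 1 s :=
            (hasDerivAt_id s).add_const 1
          have := hn.div hdd (by intro h; linarith)
          refine this.congr_deriv ?_
          ring
        exact h1.sub h2
      rw [hd.deriv]
      have : 1 / s - 4 / (s + 1) ^ 2 = (s - 1) ^ 2 / (s * (s + 1) ^ 2) := by
        field_simp; ring
      rw [this]
      have h1 : 0 < (s - 1) ^ 2 := by nlinarith
      positivity
  have h1 : g 1 < g t := hmono (by simp) (by simp; linarith) ht
  simp only [hg, Real.log_one] at h1
  norm_num at h1
  linarith

lemma key (x y : ℝ) (hx : 0 < x) (hxy : x < y) :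
    2 * (y - x) / (x + y) < Real.log y - Real.log x := by
  have hy : 0 < y := lt_trans hx hxy
  have ht : 1 < y / x := (one_lt_div hx).mpr hxy
  have h := log_gt_aux _ ht
  rw [Real.log_div (ne_of_gt hy) (ne_of_gt hx)] at h
  have heq : 2 * (y / x - 1) / (y / x + 1) = 2 * (y - x) / (x + y) := by
    have h1 : y / x - 1 = (y - x) / x := by field_simp
    have h2 : y / x + 1 = (x + y) / x := by field_simp; ring
    rw [h1, h2, mul_div_assoc, div_div_div_cancel_right₀ (ne_of_gt hx) (y - x) (x + y)]
    ring
  rw [heq] at h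
  exact h

theorem stmt_8 (φ₃ c : ℝ) (h₃ : 0 < φ₃) (hc : 0 < c) (A : ℝ → ℝ → ℝ)
    (hA : ∀ x y : ℝ, A x y =
      if x = y then 1 / φ₃ + 1 / x
      else 1 / φ₃ + (Real.log y - Real.log x) / (y - x)) :
    (∀ φ₁ : ℝ, 0 < φ₁ → φ₁ < c → φ₁ ≠ c / 2 →
        A (c / 2) (c / 2) < A φ₁ (c - φ₁)) ∧
      Tendsto (fun φ₁ : ℝ => A φ₁ (c - φ₁)) (nhdsWithin 0 (Set.Ioi 0)) atTop := by
  constructor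
  · intro φ₁ h0 h1 h2
    have hmid : A (c / 2) (c / 2) = 1 / φ₃ + 2 / c := by
      rw [hA, if_pos rfl]
      have : 1 / (c / 2) = 2 / c := by
        rw [one_div_div]
      rw [this]
    have hne : φ₁ ≠ c - φ₁ := by intro h; apply h2; linarith
    rw [hmid, hA, if_neg hne]
    have hc2 : 0 < c - φ₁ := by linarith
    apply add_lt_add_right
    rcases lt_or_gt_of_ne h2 with hlt | hgt
    · -- φ₁ < c/2, so φ₁ < c - φ₁
      have hxy : φ₁ < c - φ₁ := by linarith
      have hk := key φ₁ (c - φ₁) h0 hxy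
      have hsum : φ₁ + (c - φ₁) = c := by ring
      rw [hsum] at hk
      rw [lt_div_iff₀ (by linarith : (0:ℝ) < c - φ₁ - φ₁)]
      have : 2 / c * (c - φ₁ - φ₁) = 2 * (c - φ₁ - φ₁) / c := by ring
      linarith
    · have hxy : c - φ₁ < φ₁ := by linarith
      have hk := key (c - φ₁) φ₁ hc2 hxy
      have hsum : c - φ₁ + φ₁ = c := by ring
      rw [hsum] at hk
      have hrw : (Real.log (c - φ₁) - Real.log φ₁) / (c - φ₁ - φ₁)
          = (Real.log φ₁ - Real.log (c - φ₁)) / (φ₁ - (c - φ₁)) := by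
        rw [← neg_div_neg_eq]; ring_nf
      rw [hrw, lt_div_iff₀ (by linarith : (0:ℝ) < φ₁ - (c - φ₁))]
      have : 2 / c * (φ₁ - (c - φ₁)) = 2 * (φ₁ - (c - φ₁)) / c := by ring
      linarith
  · -- limit
    have hev : (fun φ₁ : ℝ => A φ₁ (c - φ₁)) =ᶠ[nhdsWithin 0 (Set.Ioi 0)]
        (fun φ₁ : ℝ => 1 / φ₃ + (Real.log (c - φ₁) - Real.log φ₁) * (c - φ₁ - φ₁)⁻¹) := by
      filter_upwards [self_mem_nhdsWithin,
        eventually_nhdsWithin_of_eventually_nhds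
          (Filter.Tendsto.eventually_lt_const (by linarith : (0:ℝ) < c/2) tendsto_id)] with x hx hx2
      have hne : x ≠ c - x := by
        simp only [Set.mem_Ioi] at hx
        intro h; rw [h] at hx2; simp only [id] at hx2; linarith
      rw [hA, if_neg hne]
      ring
    rw [tendsto_congr' hev]
    apply tendsto_atTop_add_const_left
    apply Filter.Tendsto.atTop_mul_pos (C := c⁻¹) (by positivity)
    · apply Filter.Tendsto.add_atTop
        (f := fun φ₁ : ℝ => Real.log (c - φ₁)) (g := fun φ₁ => -Real.log φ₁)
      · have : ContinuousAt (fun φ₁ : ℝ => Real.log (c - φ₁)) 0 := by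
          have hg : ContinuousAt Real.log ((fun φ₁ : ℝ => c - φ₁) 0) := by
            simpa using Real.continuousAt_log (ne_of_gt hc)
          exact hg.comp (by fun_prop)
        simpa using this.continuousWithinAt.tendsto
      · exact tendsto_neg_atBot_atTop.comp Real.tendsto_log_nhdsGT_zero
    · have : ContinuousAt (fun φ₁ : ℝ => (c - φ₁ - φ₁)⁻¹) 0 := by
        apply ContinuousAt.inv₀ (by fun_prop)
        simpa using ne_of_gt hc
      simpa using this.continuousWithinAt.tendsto
end

section
/- For φ₁, φ₂, φ₃ > 0 pairwise distinct and x > 0, ∫_x^∞ e^{-λ/φ₃} · (Ei((1/φ₃-1/φ₂)λ) - Ei((1/φ₃-1/φ₁)λ)) dλ = φ₃ · [ e^{-x/φ₃}·(Ei((1/φ₃-1/φ₂)x) - Ei((1/φ₃-1/φ₁)x)) - Ei(-x/φ₂) + Ei(-x/φ₁) ]. -/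
open Real MeasureTheory

open Filter Topology Asymptotics Set



noncomputable def Eis (u : ℝ) : ℝ :=
  ∑' n : ℕ, u ^ (n + 1) / ((n + 1) * (n + 1).factorial)

lemma Eis_term_summable (u : ℝ) :
    Summable (fun n : ℕ => u ^ (n + 1) / ((n + 1) * (n + 1).factorial) : ℕ → ℝ) := by
  have h : Summable (fun n : ℕ => |u| ^ (n + 1) / ((n + 1).factorial : ℝ)) :=
    (summable_nat_add_iff 1).mpr (Real.summable_pow_div_factorial |u|)
  refine Summable.of_norm (h.of_nonneg_of_le (fun n => norm_nonneg _) (fun n => ?_))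
  have h1 : (0:ℝ) < (n + 1 : ℝ) := by positivity
  have h2 : (0:ℝ) < ((n+1).factorial : ℝ) := by positivity
  rw [norm_div, norm_pow, Real.norm_eq_abs, Real.norm_eq_abs,
    abs_of_pos (by positivity : (0:ℝ) < (n + 1 : ℝ) * ((n+1).factorial : ℝ))]
  gcongr
  nlinarith [(by positivity : (0:ℝ) ≤ (n:ℝ))]

lemma hasDerivAt_Eis (u : ℝ) :
    HasDerivAt Eis (∑' n : ℕ, u ^ n / ((n + 1).factorial : ℝ)) u := by
  have hmem : u ∈ Metric.ball (0:ℝ) (|u| + 1) := by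
    rw [Metric.mem_ball, Real.dist_eq, sub_zero]; linarith [abs_nonneg u]
  refine hasDerivAt_tsum_of_isPreconnected
    (u := fun n : ℕ => (|u| + 1) ^ n / ((n + 1).factorial : ℝ))
    (g := fun n z => z ^ (n + 1) / ((n + 1) * ((n + 1).factorial : ℝ)))
    (g' := fun n z => z ^ n / ((n + 1).factorial : ℝ))
    ?_ Metric.isOpen_ball ((convex_ball (0:ℝ) (|u| + 1)).isPreconnected)
    ?_ ?_ hmem ?_ hmem
  · refine Summable.of_nonneg_of_le (fun n => by positivity) (fun n => ?_)
      (Real.summable_pow_div_factorial (|u| + 1))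
    gcongr
    exact Nat.le_succ n
  · intro n y _
    have h := (hasDerivAt_pow (n + 1) y).div_const ((n + 1) * ((n + 1).factorial : ℝ))
    refine h.congr_deriv ?_
    have h1 : ((n:ℝ) + 1) ≠ 0 := by positivity
    have h2 : ((n+1).factorial : ℝ) ≠ 0 := by positivity
    push_cast
    field_simp
  · intro n y hy
    rw [Metric.mem_ball, Real.dist_eq, sub_zero] at hy
    rw [norm_div, norm_pow, Real.norm_eq_abs, Real.norm_eq_abs,
      abs_of_pos (by positivity : (0:ℝ) < ((n+1).factorial : ℝ))]
    show |y| ^ n / ((n + 1).factorial : ℝ) ≤ (|u| + 1) ^ n / ((n + 1).factorial : ℝ)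
    gcongr
  · exact Eis_term_summable u

lemma tsum_deriv_eq {u : ℝ} (hu : u ≠ 0) :
    (∑' n : ℕ, u ^ n / ((n + 1).factorial : ℝ)) = (Real.exp u - 1) / u := by
  have hs0 : Summable (fun n : ℕ => u ^ n / (n.factorial : ℝ)) :=
    Real.summable_pow_div_factorial u
  have hs : Summable (fun n : ℕ => u ^ (n + 1) / ((n + 1).factorial : ℝ)) :=
    (summable_nat_add_iff 1).mpr hs0
  have hexp : Real.exp u = ∑' n : ℕ, u ^ n / (n.factorial : ℝ) := by
    rw [Real.exp_eq_exp_ℝ, NormedSpace.exp_eq_tsum_div]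
  have h2 : (∑' n : ℕ, u ^ (n + 1) / ((n + 1).factorial : ℝ)) = Real.exp u - 1 := by
    rw [hexp, hs0.tsum_eq_zero_add]
    simp
  have h1 : u * ∑' n : ℕ, u ^ n / ((n + 1).factorial : ℝ)
      = ∑' n : ℕ, u ^ (n + 1) / ((n + 1).factorial : ℝ) := by
    rw [← tsum_mul_left]
    congr 1; funext n; rw [pow_succ]; ring
  rw [eq_div_iff hu, mul_comm, h1, h2]



lemma Ei_eq_s12 (x : ℝ) : Ei x = Real.eulerMascheroniConstant + Real.log x + Eis x := by
  rw [Ei, Real.log_abs, Eis]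

lemma hasDerivAt_Eis' {u : ℝ} (hu : u ≠ 0) :
    HasDerivAt Eis ((Real.exp u - 1) / u) u := tsum_deriv_eq hu ▸ hasDerivAt_Eis u

lemma hasDerivAt_Ei {u : ℝ} (hu : u ≠ 0) : HasDerivAt Ei (Real.exp u / u) u := by
  have h : HasDerivAt (fun x : ℝ => Real.eulerMascheroniConstant + Real.log x + Eis x)
      (u⁻¹ + (Real.exp u - 1) / u) u :=
    ((Real.hasDerivAt_log hu).const_add _).add (hasDerivAt_Eis' hu)
  have he : (fun x : ℝ => Real.eulerMascheroniConstant + Real.log x + Eis x) = Ei :=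
    funext fun x => (Ei_eq_s12 x).symm
  rw [he] at h
  convert h using 1
  field_simp
  ring

lemma continuousAt_Ei {u : ℝ} (hu : u ≠ 0) : ContinuousAt Ei u :=
  (hasDerivAt_Ei hu).continuousAt

lemma abs_Eis_le (u : ℝ) : |Eis u| ≤ Real.exp |u| := by
  have hs1 : Summable (fun n : ℕ => |u| ^ (n + 1) / ((n + 1).factorial : ℝ)) :=
    (summable_nat_add_iff 1).mpr (Real.summable_pow_div_factorial |u|)
  have h1 : |Eis u| ≤ ∑' n : ℕ, |u| ^ (n + 1) / ((n + 1).factorial : ℝ) := by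
    rw [Eis]
    refine (norm_tsum_le_tsum_norm ((Eis_term_summable u).norm)).trans ?_
    refine Summable.tsum_le_tsum (fun n => ?_) (Eis_term_summable u).norm hs1
    rw [norm_div, norm_pow, Real.norm_eq_abs, Real.norm_eq_abs,
      abs_of_pos (by positivity : (0:ℝ) < ((n:ℝ) + 1) * ((n+1).factorial : ℝ))]
    gcongr
    have h1 : (0:ℝ) < ((n+1).factorial : ℝ) := by positivity
    nlinarith [(by positivity : (0:ℝ) ≤ (n:ℝ))]
  refine h1.trans ?_
  have hexp : Real.exp |u| = ∑' n : ℕ, |u| ^ n / (n.factorial : ℝ) := by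
    rw [Real.exp_eq_exp_ℝ, NormedSpace.exp_eq_tsum_div]
  rw [hexp, (Real.summable_pow_div_factorial |u|).tsum_eq_zero_add]
  simp only [pow_zero, Nat.factorial_zero, Nat.cast_one, div_one]
  nlinarith [(tsum_nonneg (fun n : ℕ => by positivity : ∀ n : ℕ, (0:ℝ) ≤ |u| ^ (n + 1) / ((n + 1).factorial : ℝ)) : (0:ℝ) ≤ ∑' n : ℕ, |u| ^ (n + 1) / ((n + 1).factorial : ℝ))]

lemma tendsto_Ei_neg : ∃ L : ℝ, Tendsto (fun y : ℝ => Ei (-y)) atTop (𝓝 L) := by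
  set G : ℝ → ℝ := fun y => Eis (-y) + Real.log y with hG
  have hder : ∀ y : ℝ, 0 < y → HasDerivAt G (Real.exp (-y) / y) y := by
    intro y hy
    have h1 : HasDerivAt (fun t : ℝ => Eis (-t)) ((Real.exp (-y) - 1) / (-y) * (-1)) y := by
      have := (hasDerivAt_Eis' (neg_ne_zero.mpr hy.ne')).comp y (hasDerivAt_neg y)
      simpa [Function.comp_def] using this
    have h2 := h1.add (Real.hasDerivAt_log hy.ne')
    refine h2.congr_deriv ?_
    field_simp [hy.ne']
    ring
  have hcontI : IntegrableOn (fun t : ℝ => Real.exp (-t) / t) (Ioi (1:ℝ)) := by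
    have hbase : IntegrableOn (fun t : ℝ => Real.exp (-1 * t)) (Ioi (1:ℝ)) :=
      exp_neg_integrableOn_Ioi 1 one_pos
    refine hbase.integrable.mono ?_ ?_
    · refine (ContinuousOn.aestronglyMeasurable ?_ measurableSet_Ioi)
      intro t ht
      exact ((Real.continuous_exp.comp continuous_neg).continuousAt.div continuousAt_id
        (ne_of_gt (lt_trans one_pos ht))).continuousWithinAt
    · filter_upwards [ae_restrict_mem measurableSet_Ioi] with t ht
      have ht0 : (0:ℝ) < t := lt_trans one_pos ht
      rw [Real.norm_eq_abs, Real.norm_eq_abs, abs_of_pos (div_pos (Real.exp_pos _) ht0),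
        abs_of_pos (Real.exp_pos _), neg_one_mul]
      calc Real.exp (-t) / t ≤ Real.exp (-t) / 1 := by gcongr; exact le_of_lt ht
        _ = Real.exp (-t) := div_one _
  have hFTC : ∀ y : ℝ, 1 ≤ y → G y - G 1 = ∫ t in (1:ℝ)..y, Real.exp (-t) / t := by
    intro y hy
    have hc : ∀ t ∈ Set.uIcc (1:ℝ) y, (0:ℝ) < t := by
      intro t ht
      rw [Set.uIcc_of_le hy] at ht
      exact lt_of_lt_of_le one_pos ht.1
    rw [intervalIntegral.integral_eq_sub_of_hasDerivAt (fun t ht => hder t (hc t ht))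
      (ContinuousOn.intervalIntegrable (fun t ht =>
        ((Real.continuous_exp.comp continuous_neg).continuousAt.div continuousAt_id
          (ne_of_gt (hc t ht))).continuousWithinAt))]
  have hlim : Tendsto (fun y : ℝ => ∫ t in (1:ℝ)..y, Real.exp (-t) / t) atTop
      (𝓝 (∫ t in Ioi (1:ℝ), Real.exp (-t) / t)) :=
    intervalIntegral_tendsto_integral_Ioi 1 hcontI tendsto_id
  refine ⟨Real.eulerMascheroniConstant + (G 1 + ∫ t in Ioi (1:ℝ), Real.exp (-t) / t), ?_⟩
  have h1 : Tendsto G atTop (𝓝 (G 1 + ∫ t in Ioi (1:ℝ), Real.exp (-t) / t)) := by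
    refine Tendsto.congr' ?_ ((tendsto_const_nhds.add hlim))
    filter_upwards [eventually_ge_atTop (1:ℝ)] with y hy
    have := hFTC y hy
    linarith
  refine Tendsto.congr' ?_ (tendsto_const_nhds.add h1)
  filter_upwards [eventually_gt_atTop (0:ℝ)] with y hy
  rw [Ei_eq_s12, hG]
  simp only []
  rw [Real.log_neg_eq_log]
  ring



lemma tendsto_Ei_c_neg {c : ℝ} (hc : c < 0) :
    ∃ L : ℝ, Tendsto (fun l : ℝ => Ei (c * l)) atTop (𝓝 L) := by
  obtain ⟨L, hL⟩ := tendsto_Ei_neg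
  refine ⟨L, ?_⟩
  have hm : Tendsto (fun l : ℝ => -c * l) atTop atTop :=
    Tendsto.const_mul_atTop (by linarith) tendsto_id
  have := hL.comp hm
  refine this.congr (fun l => ?_)
  simp [Function.comp, neg_mul]

lemma EiO_pos {c : ℝ} (hc : 0 < c) :
    (fun l : ℝ => Ei (c * l)) =O[atTop] (fun l => Real.exp (c * l)) := by
  have h1 : (fun l : ℝ => Real.eulerMascheroniConstant + Real.log c) =O[atTop]
      (fun l : ℝ => Real.exp (c * l)) := by
    rw [Asymptotics.isBigO_iff]
    refine ⟨|Real.eulerMascheroniConstant + Real.log c|, ?_⟩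
    filter_upwards [eventually_ge_atTop (0:ℝ)] with l hl
    rw [Real.norm_eq_abs, Real.norm_eq_abs, abs_of_pos (Real.exp_pos _)]
    nlinarith [Real.one_le_exp (by positivity : (0:ℝ) ≤ c * l), abs_nonneg (Real.eulerMascheroniConstant + Real.log c)]
  have h2 : (fun l : ℝ => Real.log l) =O[atTop] (fun l : ℝ => Real.exp (c * l)) := by
    rw [Asymptotics.isBigO_iff]
    refine ⟨1 / c, ?_⟩
    filter_upwards [eventually_ge_atTop (1:ℝ)] with l hl
    rw [Real.norm_eq_abs, Real.norm_eq_abs, abs_of_pos (Real.exp_pos _),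
      abs_of_nonneg (Real.log_nonneg hl)]
    have hlog : Real.log l ≤ l := (Real.log_le_sub_one_of_pos (by linarith)).trans (by linarith)
    have hexp : c * l ≤ Real.exp (c * l) := by
      nlinarith [Real.add_one_le_exp (c * l)]
    rw [div_mul_eq_mul_div, le_div_iff₀ hc, mul_comm]
    nlinarith
  have h3 : (fun l : ℝ => Eis (c * l)) =O[atTop] (fun l : ℝ => Real.exp (c * l)) := by
    rw [Asymptotics.isBigO_iff]
    refine ⟨1, ?_⟩
    filter_upwards [eventually_ge_atTop (0:ℝ)] with l hl
    rw [Real.norm_eq_abs, Real.norm_eq_abs, abs_of_pos (Real.exp_pos _), one_mul]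
    have := abs_Eis_le (c * l)
    rwa [abs_of_nonneg (by positivity : (0:ℝ) ≤ c * l)] at this
  have hsum := (h1.add h2).add h3
  refine hsum.congr' ?_ (EventuallyEq.refl _ _)
  filter_upwards [eventually_gt_atTop (0:ℝ)] with l hl
  rw [Ei_eq_s12, Real.log_mul hc.ne' hl.ne']
  ring

lemma term_O {φ c : ℝ} (hφ : 0 < φ) (hc : c ≠ 0) (hlt : c < 1 / φ) :
    ∃ δ : ℝ, 0 < δ ∧
      (fun l : ℝ => Real.exp (-l / φ) * Ei (c * l)) =O[atTop] (fun l => Real.exp (-δ * l)) := by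
  rcases hc.lt_or_gt with hneg | hpos
  · refine ⟨1 / φ, by positivity, ?_⟩
    obtain ⟨L, hL⟩ := tendsto_Ei_c_neg hneg
    have h1 : (fun l : ℝ => Ei (c * l)) =O[atTop] (fun _ : ℝ => (1:ℝ)) := hL.isBigO_one ℝ
    have h2 : (fun l : ℝ => Real.exp (-l / φ)) =O[atTop] (fun l : ℝ => Real.exp (-(1/φ) * l)) := by
      refine Asymptotics.isBigO_of_le _ (fun l => ?_)
      rw [Real.norm_eq_abs, Real.norm_eq_abs, abs_of_pos (Real.exp_pos _), abs_of_pos (Real.exp_pos _)]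
      apply le_of_eq; congr 1; ring
    have := h2.mul h1
    simpa using this
  · refine ⟨1 / φ - c, by linarith, ?_⟩
    have h2 : (fun l : ℝ => Real.exp (-l / φ)) =O[atTop] (fun l : ℝ => Real.exp (-l / φ)) :=
      Asymptotics.isBigO_refl _ _
    have := h2.mul (EiO_pos hpos)
    refine this.congr' (EventuallyEq.refl _ _) ?_
    refine Filter.Eventually.of_forall (fun l => ?_)
    show Real.exp (-l / φ) * Real.exp (c * l) = Real.exp (-(1 / φ - c) * l)
    rw [← Real.exp_add]
    congr 1
    field_simp
    ring

lemma exp_rate_mono {δ δ' : ℝ} (h : δ ≤ δ') :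
    (fun l : ℝ => Real.exp (-δ' * l)) =O[atTop] (fun l : ℝ => Real.exp (-δ * l)) := by
  rw [Asymptotics.isBigO_iff]
  refine ⟨1, ?_⟩
  filter_upwards [eventually_ge_atTop (0:ℝ)] with l hl
  rw [Real.norm_eq_abs, Real.norm_eq_abs, abs_of_pos (Real.exp_pos _), abs_of_pos (Real.exp_pos _), one_mul]
  exact Real.exp_le_exp.mpr (by nlinarith)

theorem stmt_12 (φ₁ φ₂ φ₃ : ℝ) (h₁ : 0 < φ₁) (h₂ : 0 < φ₂) (h₃ : 0 < φ₃)
    (h12 : φ₁ ≠ φ₂) (h13 : φ₁ ≠ φ₃) (h23 : φ₂ ≠ φ₃) (x : ℝ) (hx : 0 < x) :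
    ∫ l in Set.Ioi x,
        Real.exp (-l / φ₃) *
          (Ei ((1 / φ₃ - 1 / φ₂) * l) - Ei ((1 / φ₃ - 1 / φ₁) * l)) =
      φ₃ * (Real.exp (-x / φ₃) *
          (Ei ((1 / φ₃ - 1 / φ₂) * x) - Ei ((1 / φ₃ - 1 / φ₁) * x)) -
        Ei (-x / φ₂) + Ei (-x / φ₁)) := by
  set a : ℝ := 1 / φ₃ - 1 / φ₂ with ha
  set b : ℝ := 1 / φ₃ - 1 / φ₁ with hb
  have ha0 : a ≠ 0 := by
    rw [ha, sub_ne_zero]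
    intro h
    rw [div_eq_div_iff h₃.ne' h₂.ne', one_mul, one_mul] at h
    exact h23 h
  have hb0 : b ≠ 0 := by
    rw [hb, sub_ne_zero]
    intro h
    rw [div_eq_div_iff h₃.ne' h₁.ne', one_mul, one_mul] at h
    exact h13 h
  have halt : a < 1 / φ₃ := by
    rw [ha]; have := one_div_pos.mpr h₂; linarith
  have hblt : b < 1 / φ₃ := by
    rw [hb]; have := one_div_pos.mpr h₁; linarith
  set F : ℝ → ℝ := fun l =>
    φ₃ * (Real.exp (-l / φ₃) * (Ei (a * l) - Ei (b * l)) - Ei (-l / φ₂) + Ei (-l / φ₁))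
    with hF
  -- derivative of F
  have hderiv : ∀ l : ℝ, 0 < l →
      HasDerivAt F (-(Real.exp (-l / φ₃) * (Ei (a * l) - Ei (b * l)))) l := by
    intro l hl
    have hl0 : l ≠ 0 := hl.ne'
    have hal : a * l ≠ 0 := mul_ne_zero ha0 hl0
    have hbl : b * l ≠ 0 := mul_ne_zero hb0 hl0
    have h2l : -l / φ₂ ≠ 0 := by
      rw [div_ne_zero_iff]; exact ⟨neg_ne_zero.mpr hl0, h₂.ne'⟩
    have h1l : -l / φ₁ ≠ 0 := by
      rw [div_ne_zero_iff]; exact ⟨neg_ne_zero.mpr hl0, h₁.ne'⟩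
    have e1 : HasDerivAt (fun t : ℝ => Real.exp (-t / φ₃)) (Real.exp (-l / φ₃) * (-1 / φ₃)) l := by
      have h := (((hasDerivAt_id l).neg).div_const φ₃).exp
      simpa using h
    have e2 : HasDerivAt (fun t : ℝ => Ei (a * t)) (Real.exp (a * l) / l) l := by
      have hm : HasDerivAt (fun t : ℝ => a * t) a l := by
        simpa using (hasDerivAt_id l).const_mul a
      have h := (hasDerivAt_Ei hal).comp l hm
      have hval : Real.exp (a * l) / (a * l) * a = Real.exp (a * l) / l := by
        field_simp
      simpa [Function.comp_def, hval] using h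
    have e3 : HasDerivAt (fun t : ℝ => Ei (b * t)) (Real.exp (b * l) / l) l := by
      have hm : HasDerivAt (fun t : ℝ => b * t) b l := by
        simpa using (hasDerivAt_id l).const_mul b
      have h := (hasDerivAt_Ei hbl).comp l hm
      have hval : Real.exp (b * l) / (b * l) * b = Real.exp (b * l) / l := by
        field_simp
      simpa [Function.comp_def, hval] using h
    have e4 : HasDerivAt (fun t : ℝ => Ei (-t / φ₂)) (Real.exp (-l / φ₂) / l) l := by
      have hm : HasDerivAt (fun t : ℝ => -t / φ₂) (-1 / φ₂) l :=
        ((hasDerivAt_id l).neg).div_const φ₂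
      have h := (hasDerivAt_Ei h2l).comp l hm
      have hval : Real.exp (-l / φ₂) / (-l / φ₂) * (-1 / φ₂) = Real.exp (-l / φ₂) / l := by
        field_simp
      simpa [Function.comp_def, hval] using h
    have e5 : HasDerivAt (fun t : ℝ => Ei (-t / φ₁)) (Real.exp (-l / φ₁) / l) l := by
      have hm : HasDerivAt (fun t : ℝ => -t / φ₁) (-1 / φ₁) l :=
        ((hasDerivAt_id l).neg).div_const φ₁
      have h := (hasDerivAt_Ei h1l).comp l hm
      have hval : Real.exp (-l / φ₁) / (-l / φ₁) * (-1 / φ₁) = Real.exp (-l / φ₁) / l := by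
        field_simp
      simpa [Function.comp_def, hval] using h
    have D := (((e1.mul (e2.sub e3)).sub e4).add e5).const_mul φ₃
    refine D.congr_deriv ?_
    simp only [Pi.sub_apply]
    have hEa : Real.exp (-l / φ₂) = Real.exp (-l / φ₃) * Real.exp (a * l) := by
      rw [← Real.exp_add]; congr 1; rw [ha]; field_simp; ring
    have hEb : Real.exp (-l / φ₁) = Real.exp (-l / φ₃) * Real.exp (b * l) := by
      rw [← Real.exp_add]; congr 1; rw [hb]; field_simp; ring
    rw [hEa, hEb]
    field_simp
    ring
  -- limit of F at infinity
  have hdecay : ∀ δ : ℝ, 0 < δ → Tendsto (fun l : ℝ => Real.exp (-δ * l)) atTop (𝓝 0) :=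
    fun δ hδ => Real.tendsto_exp_atBot.comp (tendsto_id.const_mul_atTop_of_neg (neg_neg_iff_pos.2 hδ))
  obtain ⟨δa, hδa, Oa⟩ := term_O h₃ ha0 halt
  obtain ⟨δb, hδb, Ob⟩ := term_O h₃ hb0 hblt
  have ta : Tendsto (fun l : ℝ => Real.exp (-l / φ₃) * Ei (a * l)) atTop (𝓝 0) :=
    Oa.trans_tendsto (hdecay δa hδa)
  have tb : Tendsto (fun l : ℝ => Real.exp (-l / φ₃) * Ei (b * l)) atTop (𝓝 0) :=
    Ob.trans_tendsto (hdecay δb hδb)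
  obtain ⟨L, hL⟩ := tendsto_Ei_neg
  have hL2 : Tendsto (fun l : ℝ => Ei (-l / φ₂)) atTop (𝓝 L) := by
    have := hL.comp (tendsto_id.atTop_div_const h₂)
    refine this.congr (fun l => ?_)
    simp [Function.comp, neg_div]
  have hL1 : Tendsto (fun l : ℝ => Ei (-l / φ₁)) atTop (𝓝 L) := by
    have := hL.comp (tendsto_id.atTop_div_const h₁)
    refine this.congr (fun l => ?_)
    simp [Function.comp, neg_div]
  have htend : Tendsto F atTop (𝓝 0) := by
    have h := (((ta.sub tb).sub hL2).add hL1).const_mul φ₃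
    have h0 : φ₃ * (0 - 0 - L + L) = 0 := by ring
    rw [h0] at h
    refine h.congr (fun l => ?_)
    rw [hF]
    ring
  -- integrability
  have hcontf : ContinuousOn
      (fun l : ℝ => Real.exp (-l / φ₃) * (Ei (a * l) - Ei (b * l))) (Ici x) := by
    intro l hl
    have hl0 : 0 < l := lt_of_lt_of_le hx hl
    have c1 : ContinuousAt (fun t : ℝ => Real.exp (-t / φ₃)) l :=
      (Real.continuous_exp.comp ((continuous_id.neg).div_const φ₃)).continuousAt
    have c2 : ContinuousAt (fun t : ℝ => Ei (a * t)) l :=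
      (continuousAt_Ei (mul_ne_zero ha0 hl0.ne')).comp
        ((continuous_const.mul continuous_id).continuousAt)
    have c3 : ContinuousAt (fun t : ℝ => Ei (b * t)) l :=
      (continuousAt_Ei (mul_ne_zero hb0 hl0.ne')).comp
        ((continuous_const.mul continuous_id).continuousAt)
    exact (c1.mul (c2.sub c3)).continuousWithinAt
  have hOf : (fun l : ℝ => Real.exp (-l / φ₃) * (Ei (a * l) - Ei (b * l))) =O[atTop]
      (fun l : ℝ => Real.exp (-(min δa δb) * l)) := by
    have O1 := Oa.trans (exp_rate_mono (min_le_left δa δb))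
    have O2 := Ob.trans (exp_rate_mono (min_le_right δa δb))
    refine (O1.sub O2).congr (fun l => ?_) (fun l => rfl)
    ring
  have hint : IntegrableOn
      (fun l : ℝ => Real.exp (-l / φ₃) * (Ei (a * l) - Ei (b * l))) (Ioi x) :=
    integrable_of_isBigO_exp_neg (lt_min hδa hδb) hcontf hOf
  -- FTC
  have hG : ∀ l ∈ Ioi x, HasDerivAt (fun t => -F t)
      (Real.exp (-l / φ₃) * (Ei (a * l) - Ei (b * l))) l := by
    intro l hl
    have := (hderiv l (hx.trans hl)).neg
    rw [neg_neg] at this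
    exact this
  have hGc : ContinuousWithinAt (fun t => -F t) (Ici x) x :=
    ((hderiv x hx).neg).continuousAt.continuousWithinAt
  have htend' : Tendsto (fun t => -F t) atTop (𝓝 0) := by
    simpa using htend.neg
  have key := integral_Ioi_of_hasDerivAt_of_tendsto hGc hG hint htend'
  rw [zero_sub, neg_neg] at key
  exact key
end

section
/- Let s₁, s₂ > 0 and ε₁, ε₂ ∈ ℝ satisfy |ε₁| < s₁ and |ε₂| < s₂ (which holds when sᵢ = 1/φ_{i1} + 1/φ_{i2} and εᵢ = 1/φ_{i1} - 1/φ_{i2} with φ_{ij} > 0). Define, for w₁, w₂ ≥ 0 and w₃ ∈ ℂ with w₁w₂ ≥ |w₃|², p(w₁,w₂,w₃) = (K/π)·e^{-(w₁s₁+w₂s₂)/2}·S(½√((w₁ε₁ - w₂ε₂)² + 4|w₃|²ε₁ε₂)), where S(z) = sinh(z)/z extended by S(0)=1 (and for purely imaginary argument √(negative), S(it)=sin(t)/t), and K = ∏ 1/φ_{ij} > 0. Then p(w₁,w₂,w₃) > 0. -/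
open Real

/-- Analytic extension of `sinh (√u) / √u` to all real `u`,
given by the power series `∑ uⁿ/(2n+1)!`. -/
noncomputable def T (u : ℝ) : ℝ := ∑' n : ℕ, u ^ n / (2 * n + 1).factorial

lemma T_summable {u : ℝ} (hu : 0 ≤ u) :
    Summable (fun n : ℕ => u ^ n / (2 * n + 1).factorial) := by
  refine Summable.of_nonneg_of_le (fun n => by positivity)
    (fun n => ?_) (Real.summable_pow_div_factorial u)
  apply div_le_div_of_nonneg_left (by positivity) (by positivity)
  exact_mod_cast Nat.factorial_le (by omega)

lemma T_pos {u : ℝ} (hu : 0 ≤ u) : 0 < T u := by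
  have h0 : (1 : ℝ) ≤ T u := by
    have := Summable.le_tsum (T_summable hu) 0 (fun i _ => by positivity)
    simpa [T] using this
  linarith

theorem stmt_13 (s₁ s₂ ε₁ ε₂ K : ℝ) (hs₁ : 0 < s₁) (hs₂ : 0 < s₂)
    (hε₁ : |ε₁| < s₁) (hε₂ : |ε₂| < s₂) (hK : 0 < K)
    (w₁ w₂ : ℝ) (w₃ : ℂ) (hw₁ : 0 ≤ w₁) (hw₂ : 0 ≤ w₂)
    (hw : ‖w₃‖ ^ 2 ≤ w₁ * w₂) :
    0 < K / π * Real.exp (-(w₁ * s₁ + w₂ * s₂) / 2) *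
        T (((w₁ * ε₁ - w₂ * ε₂) ^ 2 + 4 * ‖w₃‖ ^ 2 * ε₁ * ε₂) / 4) := by
  set a : ℝ := ‖w₃‖ ^ 2 with ha
  have ha0 : 0 ≤ a := by positivity
  have hu : 0 ≤ ((w₁ * ε₁ - w₂ * ε₂) ^ 2 + 4 * a * ε₁ * ε₂) / 4 := by
    rcases le_or_gt 0 (ε₁ * ε₂) with h | h
    · nlinarith [sq_nonneg (w₁ * ε₁ - w₂ * ε₂)]
    · nlinarith [sq_nonneg (w₁ * ε₁ + w₂ * ε₂), mul_nonneg (sub_nonneg.2 hw) (le_of_lt (neg_pos.2 h))]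
  exact mul_pos (mul_pos (div_pos hK pi_pos) (Real.exp_pos _)) (T_pos hu)
end
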